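/- arXiv:1501.05376 — 2 statements merged into one kernel-verified Lean document; each statement's English description precedes it below -/
import Mathlib

section
/- Let N ≥ 2 be an integer. On a common probability space let W have the Gamma(N−1,1) distribution, let X and Z be independent random variables each with the Gamma(N,1) distribution, and let Y be any nonnegative random variable (W and Y may depend arbitrarily on the other variables). Fix θ ∈ (0,1) and η, d₁, d_I, d₂, γ, ρ_I > 0. Then lim_{ρ→∞} ρ^{N−1} · Prob( min( (1−θ)·ρ·W/d₁ , (η·θ/d₂)·(ρ·X/d₁ + ρ_I·Y/d_I)·Z ) < γ ) = (d₁·γ/(1−θ))^{N−1} / (N−1)!. In particular the ZF/MRT scheme achieves diversity order N−1. -/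
open MeasureTheory ProbabilityTheory Filter Real Set
open scoped ENNReal

lemma lintegral_Ico_pow (n : ℕ) (c t : ℝ) (hc : 0 ≤ c) (ht : 0 ≤ t) :
    ∫⁻ x in Set.Ico 0 t, ENNReal.ofReal (c * x ^ n) =
      ENNReal.ofReal (c * (t ^ (n + 1) / (n + 1))) := by
  rw [← MeasureTheory.ofReal_integral_eq_lintegral_ofReal]
  · congr 1
    rw [setIntegral_congr_set Ico_ae_eq_Ioc, ← intervalIntegral.integral_of_le ht,
      intervalIntegral.integral_const_mul, integral_pow]
    simp
  · exact ((continuous_const.mul (continuous_pow n)).integrableOn_Icc (a := 0) (b := t)).mono_set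
      Set.Ico_subset_Icc_self
  · filter_upwards [ae_restrict_mem measurableSet_Ico] with x hx
    exact mul_nonneg hc (pow_nonneg hx.1 n)

lemma gammaPDF_nat (n : ℕ) (hn : 1 ≤ n) {x : ℝ} (hx : 0 ≤ x) :
    gammaPDF (n : ℝ) 1 x =
      ENNReal.ofReal ((1 / (n - 1).factorial : ℝ) * x ^ (n - 1) * Real.exp (-x)) := by
  rw [gammaPDF_of_nonneg hx]
  congr 1
  have h1 : ((n : ℝ)) = ((n - 1 : ℕ) : ℝ) + 1 := by
    rw [← Nat.sub_add_cancel hn]; push_cast; ring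
  rw [Real.one_rpow, h1, Real.Gamma_nat_eq_factorial, add_sub_cancel_right,
    Real.rpow_natCast]
  ring

lemma gamma_Iio_eq (n : ℕ) {t : ℝ} (ht : 0 ≤ t) :
    gammaMeasure (n : ℝ) 1 (Set.Iio t) = ∫⁻ x in Set.Ico 0 t, gammaPDF (n : ℝ) 1 x := by
  rw [gammaMeasure, withDensity_apply _ measurableSet_Iio]
  have hs : Set.Iio t = Set.Iio 0 ∪ Set.Ico 0 t := by
    ext x
    simp only [Set.mem_Iio, Set.mem_union, Set.mem_Ico]
    constructor
    · intro h; rcases lt_or_ge x 0 with h0 | h0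
      · exact Or.inl h0
      · exact Or.inr ⟨h0, h⟩
    · rintro (h | ⟨_, h⟩)
      · exact lt_of_lt_of_le h ht
      · exact h
  rw [hs, lintegral_union measurableSet_Ico (by
    simp only [Set.disjoint_left, Set.mem_Iio, Set.mem_Ico]
    intro x hx; simp [not_le.mpr hx])]
  rw [lintegral_gammaPDF_of_nonpos le_rfl, zero_add]

lemma gamma_Iio_le (n : ℕ) (hn : 1 ≤ n) {t : ℝ} (ht : 0 ≤ t) :
    gammaMeasure (n : ℝ) 1 (Set.Iio t) ≤ ENNReal.ofReal (t ^ n / n.factorial) := by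
  rw [gamma_Iio_eq n ht]
  have key : ∫⁻ x in Set.Ico 0 t, gammaPDF (n : ℝ) 1 x ≤
      ∫⁻ x in Set.Ico 0 t, ENNReal.ofReal ((1 / (n - 1).factorial : ℝ) * x ^ (n - 1)) := by
    refine setLIntegral_mono_ae (by fun_prop) ?_
    filter_upwards with x hx
    rw [gammaPDF_nat n hn hx.1]
    apply ENNReal.ofReal_le_ofReal
    have h1 : Real.exp (-x) ≤ 1 := Real.exp_le_one_iff.mpr (neg_nonpos.mpr hx.1)
    calc (1 / (n - 1).factorial : ℝ) * x ^ (n - 1) * Real.exp (-x)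
        ≤ (1 / (n - 1).factorial : ℝ) * x ^ (n - 1) * 1 := by
          apply mul_le_mul_of_nonneg_left h1
          exact mul_nonneg (by positivity) (pow_nonneg hx.1 _)
      _ = _ := by ring
  refine key.trans ?_
  rw [lintegral_Ico_pow (n - 1) _ t (by positivity) ht]
  apply ENNReal.ofReal_le_ofReal
  rw [Nat.sub_add_cancel hn]
  have hcast : ((n - 1 : ℕ) : ℝ) + 1 = n := by
    rw [← Nat.sub_add_cancel hn]; push_cast; ring
  have hfac : (n.factorial : ℝ) = n * (n - 1).factorial := by
    exact_mod_cast (Nat.mul_factorial_pred (by omega : n ≠ 0)).symm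
  rw [hcast, hfac]
  have hn0 : (0:ℝ) < n := by exact_mod_cast (by omega : 0 < n)
  have hf0 : (0:ℝ) < (n - 1).factorial := by exact_mod_cast (n-1).factorial_pos
  apply le_of_eq
  field_simp
  try ring
  try exact Or.inl trivial

lemma gamma_Iio_ge (n : ℕ) (hn : 1 ≤ n) {t : ℝ} (ht : 0 ≤ t) :
    ENNReal.ofReal (Real.exp (-t) * (t ^ n / n.factorial)) ≤
      gammaMeasure (n : ℝ) 1 (Set.Iio t) := by
  rw [gamma_Iio_eq n ht]
  have key : ∫⁻ x in Set.Ico 0 t,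
        ENNReal.ofReal (Real.exp (-t) * ((1 / (n - 1).factorial : ℝ) * x ^ (n - 1))) ≤
      ∫⁻ x in Set.Ico 0 t, gammaPDF (n : ℝ) 1 x := by
    refine setLIntegral_mono_ae ((measurable_gammaPDFReal _ _).ennreal_ofReal.aemeasurable) ?_
    filter_upwards with x hx
    rw [gammaPDF_nat n hn hx.1]
    apply ENNReal.ofReal_le_ofReal
    have h1 : Real.exp (-t) ≤ Real.exp (-x) := Real.exp_le_exp.mpr (by linarith [hx.2])
    calc Real.exp (-t) * ((1 / (n - 1).factorial : ℝ) * x ^ (n - 1))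
        ≤ Real.exp (-x) * ((1 / (n - 1).factorial : ℝ) * x ^ (n - 1)) := by
          apply mul_le_mul_of_nonneg_right h1
          exact mul_nonneg (by positivity) (pow_nonneg hx.1 _)
      _ = _ := by ring
  refine le_trans ?_ key
  have : ∀ x : ℝ, Real.exp (-t) * ((1 / (n - 1).factorial : ℝ) * x ^ (n - 1)) =
      (Real.exp (-t) * (1 / (n - 1).factorial : ℝ)) * x ^ (n - 1) := fun x => by ring
  simp_rw [this]
  rw [lintegral_Ico_pow (n - 1) _ t (by positivity) ht]
  apply ENNReal.ofReal_le_ofReal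
  rw [Nat.sub_add_cancel hn]
  have hcast : ((n - 1 : ℕ) : ℝ) + 1 = n := by
    rw [← Nat.sub_add_cancel hn]; push_cast; ring
  have hfac : (n.factorial : ℝ) = n * (n - 1).factorial := by
    exact_mod_cast (Nat.mul_factorial_pred (by omega : n ≠ 0)).symm
  rw [hcast, hfac]
  have hn0 : (0:ℝ) < n := by exact_mod_cast (by omega : 0 < n)
  have hf0 : (0:ℝ) < (n - 1).factorial := by exact_mod_cast (n-1).factorial_pos
  apply le_of_eq
  field_simp
  try ring
  try exact Or.inl trivial

lemma gamma_Iic_zero (a : ℝ) : gammaMeasure a 1 (Set.Iic 0) = 0 := by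
  have h1 : gammaMeasure a 1 (Set.Iio 0) = 0 := by
    rw [gammaMeasure, withDensity_apply _ measurableSet_Iio]
    exact lintegral_gammaPDF_of_nonpos le_rfl
  have h2 : gammaMeasure a 1 {(0:ℝ)} = 0 :=
    withDensity_absolutelyContinuous _ _ (Real.volume_singleton)
  have : Set.Iic (0:ℝ) = Set.Iio 0 ∪ {0} := by
    ext x; simp [le_iff_lt_or_eq]
  rw [this]
  exact le_antisymm ((measure_union_le _ _).trans (by simp [h1, h2])) zero_le

lemma gamma_rpow_lintegral_ne_top (N : ℕ) (hN : 2 ≤ N) :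
    ∫⁻ x, ENNReal.ofReal (x ^ (-((N:ℝ) - 1/2))) ∂(gammaMeasure N 1) ≠ ⊤ := by
  set q : ℝ := (N:ℝ) - 1/2 with hq
  have hfm : Measurable fun x : ℝ => ENNReal.ofReal (x ^ (-q)) := by
    exact (measurable_id.pow_const _).ennreal_ofReal
  have hpdfm : Measurable (gammaPDF (N:ℝ) 1) := (measurable_gammaPDFReal _ _).ennreal_ofReal
  rw [gammaMeasure, lintegral_withDensity_eq_lintegral_mul volume hpdfm hfm]
  have hsplit := lintegral_add_compl (μ := volume) (fun x : ℝ => (gammaPDF (N:ℝ) 1 * fun x => ENNReal.ofReal (x ^ (-q))) x) (measurableSet_Ioi (a := (0:ℝ)))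
  rw [← hsplit]
  have hzero : ∫⁻ x in (Set.Ioi (0:ℝ))ᶜ,
      (gammaPDF (N:ℝ) 1 * fun x => ENNReal.ofReal (x ^ (-q))) x = 0 := by
    rw [Set.compl_Ioi]
    rw [setLIntegral_congr_fun measurableSet_Iic (fun x hx => ?_), lintegral_zero]
    rcases lt_or_eq_of_le (show x ≤ 0 from hx) with h | h
    · simp [Pi.mul_apply, gammaPDF_of_neg h]
    · subst h
      simp only [Pi.mul_apply, gammaPDF_of_nonneg le_rfl]
      rw [Real.zero_rpow (by
        have : (2:ℝ) ≤ (N:ℝ) := by exact_mod_cast hN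
        intro h; linarith : (N:ℝ) - 1 ≠ 0)]
      simp
  rw [hzero, add_zero]
  have hbound : ∫⁻ x in Set.Ioi (0:ℝ),
      (gammaPDF (N:ℝ) 1 * fun x => ENNReal.ofReal (x ^ (-q))) x ≤
      ∫⁻ x in Set.Ioi (0:ℝ),
        ENNReal.ofReal ((1 / Real.Gamma N) * (Real.exp (-x) * x ^ ((1/2:ℝ) - 1))) := by
    refine setLIntegral_mono_ae (by fun_prop) ?_
    filter_upwards with x hx
    have hx0 : (0:ℝ) < x := hx
    rw [Pi.mul_apply, gammaPDF_of_nonneg hx0.le, ← ENNReal.ofReal_mul (by positivity)]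
    apply ENNReal.ofReal_le_ofReal
    rw [Real.one_rpow, one_mul]
    have : x ^ ((N:ℝ) - 1) * x ^ (-q) = x ^ ((1/2:ℝ) - 1) := by
      rw [← Real.rpow_add hx0]; norm_num [hq]
    calc 1 / Real.Gamma N * x ^ ((N:ℝ) - 1) * Real.exp (-x) * x ^ (-q)
        = 1 / Real.Gamma N * (x ^ ((N:ℝ) - 1) * x ^ (-q)) * Real.exp (-x) := by ring
      _ ≤ _ := by rw [this]; apply le_of_eq; ring
  refine ne_of_lt (lt_of_le_of_lt hbound ?_)
  have hint : IntegrableOn (fun x : ℝ => (1 / Real.Gamma N) * (Real.exp (-x) * x ^ ((1/2:ℝ) - 1))) (Set.Ioi 0) :=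
    (Real.GammaIntegral_convergent (by norm_num : (0:ℝ) < 1/2)).const_mul _
  have hnn : 0 ≤ᵐ[volume.restrict (Set.Ioi (0:ℝ))]
      fun x : ℝ => (1 / Real.Gamma N) * (Real.exp (-x) * x ^ ((1/2:ℝ) - 1)) := by
    filter_upwards [ae_restrict_mem measurableSet_Ioi] with x hx
    have hx0 : (0:ℝ) < x := hx
    have hg : 0 < Real.Gamma N := Real.Gamma_pos_of_pos (by positivity)
    positivity
  exact (hasFiniteIntegral_iff_ofReal hnn).mp hint.hasFiniteIntegral

lemma gamma_prod_bound (N : ℕ) (hN : 2 ≤ N) :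
    ∃ M : ℝ, 0 ≤ M ∧ ∀ s : ℝ, 0 < s →
      ((gammaMeasure (N:ℝ) 1).prod (gammaMeasure (N:ℝ) 1)) {p : ℝ × ℝ | p.1 * p.2 < s}
        ≤ ENNReal.ofReal (s ^ ((N:ℝ) - 1/2) * M) := by
  set q : ℝ := (N:ℝ) - 1/2 with hq
  have hN0 : (0:ℝ) < N := by exact_mod_cast (by omega : 0 < N)
  haveI : IsProbabilityMeasure (gammaMeasure (N:ℝ) 1) := isProbabilityMeasure_gammaMeasure hN0 one_pos
  set Me : ℝ≥0∞ := ∫⁻ x, ENNReal.ofReal (x ^ (-q)) ∂(gammaMeasure (N:ℝ) 1) with hMe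
  have hMetop : Me ≠ ⊤ := gamma_rpow_lintegral_ne_top N hN
  refine ⟨Me.toReal, ENNReal.toReal_nonneg, fun s hs => ?_⟩
  have hmeas : MeasurableSet {p : ℝ × ℝ | p.1 * p.2 < s} :=
    (measurable_fst.mul measurable_snd) measurableSet_Iio
  rw [Measure.prod_apply hmeas]
  have hae : ∀ᵐ x ∂(gammaMeasure (N:ℝ) 1), 0 < x := by
    rw [ae_iff]
    have : {x : ℝ | ¬ 0 < x} = Set.Iic 0 := by ext x; simp
    rw [this]; exact gamma_Iic_zero _
  have hbound : ∫⁻ x, gammaMeasure (N:ℝ) 1 (Prod.mk x ⁻¹' {p : ℝ × ℝ | p.1 * p.2 < s})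
        ∂(gammaMeasure (N:ℝ) 1) ≤
      ∫⁻ x, ENNReal.ofReal (s ^ q) * ENNReal.ofReal (x ^ (-q)) ∂(gammaMeasure (N:ℝ) 1) := by
    refine lintegral_mono_ae ?_
    filter_upwards [hae] with x hx0
    have hpre : Prod.mk x ⁻¹' {p : ℝ × ℝ | p.1 * p.2 < s} = Set.Iio (s / x) := by
      ext z; simp [Set.mem_Iio, lt_div_iff₀' hx0]
    rw [hpre]
    have hu0 : 0 < s / x := div_pos hs hx0
    have hval : ENNReal.ofReal (s ^ q) * ENNReal.ofReal (x ^ (-q)) =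
        ENNReal.ofReal ((s / x) ^ q) := by
      rw [← ENNReal.ofReal_mul (Real.rpow_nonneg hs.le q), Real.div_rpow hs.le hx0.le,
        Real.rpow_neg hx0.le, div_eq_mul_inv]
    rw [hval]
    rcases le_or_gt (s / x) 1 with hu1 | hu1
    · refine (gamma_Iio_le N (by omega) hu0.le).trans (ENNReal.ofReal_le_ofReal ?_)
      have h1 : (s / x) ^ N / (N.factorial : ℝ) ≤ (s / x) ^ N := by
        apply div_le_self (pow_nonneg hu0.le _)
        exact_mod_cast N.factorial_pos
      have h2 : (s / x) ^ N ≤ (s / x) ^ q := by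
        rw [← Real.rpow_natCast (s/x) N]
        exact Real.rpow_le_rpow_of_exponent_ge hu0 hu1 (by rw [hq]; norm_num)
      linarith
    · calc gammaMeasure (N:ℝ) 1 (Set.Iio (s/x)) ≤ 1 := prob_le_one
        _ = ENNReal.ofReal 1 := by simp
        _ ≤ _ := ENNReal.ofReal_le_ofReal
            (Real.one_le_rpow hu1.le (by
              have h2 : (2:ℝ) ≤ (N:ℝ) := by exact_mod_cast hN
              rw [hq]; linarith))
  refine hbound.trans ?_
  have hm2 : Measurable fun x : ℝ => ENNReal.ofReal (x ^ (-q)) :=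
    (measurable_id.pow_const _).ennreal_ofReal
  rw [lintegral_const_mul _ hm2, ← hMe,
    ENNReal.ofReal_mul (Real.rpow_nonneg hs.le q), ENNReal.ofReal_toReal hMetop]

/-- **Theorem 8** (high-SNR outage of the ZF/MRT scheme): let `N ≥ 2`, let `W ~ Gamma(N−1,1)`,
let `X, Z ~ Gamma(N,1)` be independent, and let `Y ≥ 0` be an arbitrary nonnegative random
variable (`W` and `Y` may depend arbitrarily on the other variables). For `θ ∈ (0,1)` and
`η, d₁, d_I, d₂, γ, ρ_I > 0`,
`ρ^{N−1} · Prob(min((1−θ)ρW/d₁, (ηθ/d₂)(ρX/d₁ + ρ_I Y/d_I)Z) < γ)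
  → (d₁γ/(1−θ))^{N−1}/(N−1)!` as `ρ → ∞`;
in particular the ZF/MRT scheme achieves diversity order `N−1`. -/
theorem zf_mrt_high_snr_outage
    {Ω : Type*} [MeasureSpace Ω] [IsProbabilityMeasure (ℙ : Measure Ω)]
    (N : ℕ) (hN : 2 ≤ N) (W X Z Y : Ω → ℝ)
    (hXZ : IndepFun X Z ℙ)
    (hW : Measure.map W ℙ = gammaMeasure ((N : ℝ) - 1) 1)
    (hX : Measure.map X ℙ = gammaMeasure N 1)
    (hZ : Measure.map Z ℙ = gammaMeasure N 1)
    (hY : ∀ ω, 0 ≤ Y ω) (hYm : Measurable Y) (hWm : Measurable W)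
    (θ η d₁ dI d₂ γ ρI : ℝ) (hθ : θ ∈ Set.Ioo (0 : ℝ) 1)
    (hη : 0 < η) (hd₁ : 0 < d₁) (hdI : 0 < dI) (hd₂ : 0 < d₂)
    (hγ : 0 < γ) (hρI : 0 < ρI) :
    Tendsto (fun ρ : ℝ => ρ ^ (N - 1) *
        (ℙ {ω | min ((1 - θ) * ρ * W ω / d₁)
            ((η * θ / d₂) * (ρ * X ω / d₁ + ρI * Y ω / dI) * Z ω) < γ}).toReal)
      atTop
      (nhds ((d₁ * γ / (1 - θ)) ^ (N - 1) / (Nat.factorial (N - 1) : ℝ))) := by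
  obtain ⟨hθ0, hθ1⟩ := hθ
  have h1θ : 0 < 1 - θ := by linarith
  set c : ℝ := d₁ * γ / (1 - θ) with hcdef
  have hc : 0 < c := by positivity
  have hNcast : ((N - 1 : ℕ) : ℝ) = (N : ℝ) - 1 := by
    rw [Nat.cast_sub (by omega), Nat.cast_one]
  have hW' : Measure.map W ℙ = gammaMeasure ((N - 1 : ℕ) : ℝ) 1 := by rw [hNcast]; exact hW
  have hN0 : (0:ℝ) < N := by exact_mod_cast (by omega : 0 < N)
  haveI hPg : IsProbabilityMeasure (gammaMeasure (N:ℝ) 1) := isProbabilityMeasure_gammaMeasure hN0 one_pos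
  have hXae : AEMeasurable X ℙ := by
    by_contra h
    rw [Measure.map_of_not_aemeasurable h] at hX
    exact (IsProbabilityMeasure.ne_zero (gammaMeasure (N:ℝ) 1)) hX.symm
  have hZae : AEMeasurable Z ℙ := by
    by_contra h
    rw [Measure.map_of_not_aemeasurable h] at hZ
    exact (IsProbabilityMeasure.ne_zero (gammaMeasure (N:ℝ) 1)) hZ.symm
  have hmap : Measure.map (fun ω => (X ω, Z ω)) ℙ =
      (gammaMeasure (N:ℝ) 1).prod (gammaMeasure (N:ℝ) 1) := by
    rw [(indepFun_iff_map_prod_eq_prod_map_map hXae hZae).mp hXZ, hX, hZ]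
  obtain ⟨M, hM0, hMs⟩ := gamma_prod_bound N hN
  set q : ℝ := (N:ℝ) - 1/2 with hqdef
  set s₀ : ℝ := γ * d₁ * d₂ / (η * θ) with hs₀def
  have hs₀ : 0 < s₀ := by positivity
  set L : ℝ := c ^ (N - 1) / ((N-1).factorial : ℝ) with hLdef
  -- probability of first-hop event
  have hPA : ∀ ρ : ℝ, ℙ {ω | W ω < c / ρ} = gammaMeasure ((N - 1 : ℕ) : ℝ) 1 (Set.Iio (c / ρ)) := by
    intro ρ
    have : {ω | W ω < c / ρ} = W ⁻¹' Set.Iio (c / ρ) := rfl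
    rw [this, ← Measure.map_apply hWm measurableSet_Iio, hW']
  -- probability of the product event
  have hPB : ∀ ρ : ℝ, 0 < ρ → ℙ {ω | X ω * Z ω < s₀ / ρ} ≤
      ENNReal.ofReal ((s₀ / ρ) ^ q * M) := by
    intro ρ hρ
    have hms : MeasurableSet {p : ℝ × ℝ | p.1 * p.2 < s₀ / ρ} :=
      (measurable_fst.mul measurable_snd) measurableSet_Iio
    have : {ω | X ω * Z ω < s₀ / ρ} =
        (fun ω => (X ω, Z ω)) ⁻¹' {p : ℝ × ℝ | p.1 * p.2 < s₀ / ρ} := rfl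
    rw [this, ← Measure.map_apply_of_aemeasurable (hXae.prodMk hZae) hms, hmap]
    exact hMs _ (div_pos hs₀ hρ)
  have hPZ : ℙ {ω | Z ω < 0} = 0 := by
    have : {ω | Z ω < 0} = Z ⁻¹' Set.Iio 0 := rfl
    rw [this, ← Measure.map_apply_of_aemeasurable hZae measurableSet_Iio, hZ]
    exact le_antisymm (le_trans (measure_mono Set.Iio_subset_Iic_self)
      (le_of_eq (gamma_Iic_zero _))) zero_le
  -- the event set and its inclusions
  set E : ℝ → Set Ω := fun ρ => {ω | min ((1 - θ) * ρ * W ω / d₁)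
      ((η * θ / d₂) * (ρ * X ω / d₁ + ρI * Y ω / dI) * Z ω) < γ} with hEdef
  have hAiff : ∀ ρ : ℝ, 0 < ρ → ∀ w : ℝ, ((1 - θ) * ρ * w / d₁ < γ ↔ w < c / ρ) := by
    intro ρ hρ w
    rw [div_lt_iff₀ hd₁, hcdef, div_div, lt_div_iff₀ (by positivity : 0 < (1 - θ) * ρ)]
    constructor <;> intro h <;> nlinarith
  have hsub₁ : ∀ ρ : ℝ, 0 < ρ → {ω | W ω < c / ρ} ⊆ E ρ := by
    intro ρ hρ ω hω
    exact min_lt_iff.mpr (Or.inl ((hAiff ρ hρ (W ω)).mpr hω))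
  have hsub₂ : ∀ ρ : ℝ, 0 < ρ →
      E ρ ⊆ {ω | W ω < c / ρ} ∪ ({ω | X ω * Z ω < s₀ / ρ} ∪ {ω | Z ω < 0}) := by
    intro ρ hρ ω hω
    have hω' : min ((1 - θ) * ρ * W ω / d₁)
        ((η * θ / d₂) * (ρ * X ω / d₁ + ρI * Y ω / dI) * Z ω) < γ := hω
    rcases min_lt_iff.mp hω' with h | h
    · exact Or.inl ((hAiff ρ hρ (W ω)).mp h)
    · rcases lt_or_ge (Z ω) 0 with hZ0 | hZ0
      · exact Or.inr (Or.inr hZ0)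
      · refine Or.inr (Or.inl ?_)
        have h3 : ρ * X ω / d₁ ≤ ρ * X ω / d₁ + ρI * Y ω / dI :=
          le_add_of_nonneg_right (div_nonneg (mul_nonneg hρI.le (hY ω)) hdI.le)
        have h4 : (0:ℝ) ≤ η * θ / d₂ := by positivity
        have h5 : (η * θ / d₂) * (ρ * X ω / d₁) * Z ω < γ :=
          lt_of_le_of_lt (mul_le_mul_of_nonneg_right
            (mul_le_mul_of_nonneg_left h3 h4) hZ0) h
        have h2 : (η * θ / d₂) * (ρ * X ω / d₁) * Z ω =
            (η * θ * ρ) * (X ω * Z ω) / (d₁ * d₂) := by ring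
        rw [h2, div_lt_iff₀ (mul_pos hd₁ hd₂)] at h5
        show X ω * Z ω < s₀ / ρ
        rw [hs₀def, div_div, lt_div_iff₀ (by positivity : 0 < η * θ * ρ)]
        calc X ω * Z ω * (η * θ * ρ) = η * θ * ρ * (X ω * Z ω) := by ring
          _ < γ * (d₁ * d₂) := h5
          _ = γ * d₁ * d₂ := by ring
  have hpowc : ∀ ρ : ℝ, 0 < ρ →
      ρ ^ (N - 1) * ((c / ρ) ^ (N - 1) / ((N-1).factorial : ℝ)) = L := by
    intro ρ hρ
    have hpz : ρ ^ (N - 1) ≠ 0 := pow_ne_zero _ (ne_of_gt hρ)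
    rw [hLdef, div_pow]
    field_simp
  -- lower function g
  set g : ℝ → ℝ := fun ρ => ρ ^ (N - 1) *
      (gammaMeasure ((N - 1 : ℕ) : ℝ) 1 (Set.Iio (c / ρ))).toReal with hgdef
  haveI hPg1 : IsProbabilityMeasure (gammaMeasure ((N - 1 : ℕ) : ℝ) 1) :=
    isProbabilityMeasure_gammaMeasure (by exact_mod_cast (by omega : 0 < N - 1)) one_pos
  have hgamma_ne_top : ∀ u : ℝ, gammaMeasure ((N - 1 : ℕ) : ℝ) 1 (Set.Iio u) ≠ ⊤ :=
    fun u => measure_ne_top _ _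
  -- g → L by squeeze
  have hg : Tendsto g atTop (nhds L) := by
    have hlo : ∀ᶠ ρ in atTop, Real.exp (-(c/ρ)) * L ≤ g ρ := by
      filter_upwards [eventually_gt_atTop (0:ℝ)] with ρ hρ
      have hcd : 0 ≤ c / ρ := (div_pos hc hρ).le
      have h1 := gamma_Iio_ge (N - 1) (by omega) hcd
      have h2 : Real.exp (-(c/ρ)) * ((c/ρ) ^ (N-1) / ((N-1).factorial : ℝ)) ≤
          (gammaMeasure ((N - 1 : ℕ) : ℝ) 1 (Set.Iio (c / ρ))).toReal :=
        (ENNReal.ofReal_le_iff_le_toReal (hgamma_ne_top _)).mp h1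
      have h3 := mul_le_mul_of_nonneg_left h2 (pow_nonneg hρ.le (N-1))
      calc Real.exp (-(c/ρ)) * L
          = ρ ^ (N-1) * (Real.exp (-(c/ρ)) * ((c/ρ) ^ (N-1) / ((N-1).factorial : ℝ))) := by
            rw [← hpowc ρ hρ]; ring
        _ ≤ g ρ := h3
    have hhi : ∀ᶠ ρ in atTop, g ρ ≤ L := by
      filter_upwards [eventually_gt_atTop (0:ℝ)] with ρ hρ
      have hcd : 0 ≤ c / ρ := (div_pos hc hρ).le
      have h1 := gamma_Iio_le (N - 1) (by omega) hcd
      have h2 : (gammaMeasure ((N - 1 : ℕ) : ℝ) 1 (Set.Iio (c / ρ))).toReal ≤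
          (c/ρ) ^ (N-1) / ((N-1).factorial : ℝ) := by
        refine le_trans (ENNReal.toReal_mono ENNReal.ofReal_ne_top h1) ?_
        rw [ENNReal.toReal_ofReal (by positivity)]
      have h3 := mul_le_mul_of_nonneg_left h2 (pow_nonneg hρ.le (N-1))
      calc g ρ ≤ ρ ^ (N-1) * ((c/ρ) ^ (N-1) / ((N-1).factorial : ℝ)) := h3
        _ = L := hpowc ρ hρ
    have hexp : Tendsto (fun ρ : ℝ => Real.exp (-(c/ρ)) * L) atTop (nhds L) := by
      have h0 : Tendsto (fun ρ : ℝ => c / ρ) atTop (nhds 0) := by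
        simpa [div_eq_mul_inv] using tendsto_inv_atTop_zero.const_mul c
      have h1 : Tendsto (fun ρ : ℝ => Real.exp (-(c/ρ))) atTop (nhds 1) := by
        have h0n : Tendsto (fun ρ : ℝ => -(c / ρ)) atTop (nhds 0) := by
          simpa using h0.neg
        simpa [Function.comp_def] using (Real.continuous_exp.tendsto 0).comp h0n
      simpa using h1.mul_const L
    exact tendsto_of_tendsto_of_tendsto_of_le_of_le' hexp tendsto_const_nhds hlo hhi
  -- upper correction term
  set r : ℝ → ℝ := fun ρ => ρ ^ (N - 1) * ((s₀ / ρ) ^ q * M) with hrdef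
  have hr : Tendsto r atTop (nhds 0) := by
    have key : ∀ᶠ ρ in atTop, (s₀ ^ q * M) * ρ ^ (-(1/2:ℝ)) = r ρ := by
      filter_upwards [eventually_gt_atTop (0:ℝ)] with ρ hρ
      rw [hrdef]
      have h1 : (s₀ / ρ) ^ q = s₀ ^ q * ρ ^ (-q) :=
        by rw [Real.div_rpow hs₀.le hρ.le, Real.rpow_neg hρ.le, div_eq_mul_inv]
      have h2 : (ρ : ℝ) ^ (N - 1) = ρ ^ (((N - 1 : ℕ) : ℝ)) := (Real.rpow_natCast ρ (N-1)).symm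
      simp only [h1, h2]
      have h3 : ((N - 1 : ℕ) : ℝ) + (-q) = -(1/2 : ℝ) := by
        rw [hNcast, hqdef]; ring
      rw [show ρ ^ (((N - 1 : ℕ) : ℝ)) * (s₀ ^ q * ρ ^ (-q) * M) =
        (s₀ ^ q * M) * (ρ ^ (((N - 1 : ℕ) : ℝ)) * ρ ^ (-q)) from by ring,
        ← Real.rpow_add hρ, h3]
    have h4 : Tendsto (fun ρ : ℝ => (s₀ ^ q * M) * ρ ^ (-(1/2:ℝ))) atTop (nhds 0) := by
      simpa using (tendsto_rpow_neg_atTop (by norm_num : (0:ℝ) < 1/2)).const_mul (s₀ ^ q * M)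
    exact h4.congr' key
  have hh : Tendsto (fun ρ => L + r ρ) atTop (nhds L) := by
    simpa using tendsto_const_nhds.add hr
  -- squeeze the main quantity
  have hmain_lo : ∀ᶠ ρ in atTop, g ρ ≤ ρ ^ (N - 1) * (ℙ (E ρ)).toReal := by
    filter_upwards [eventually_gt_atTop (0:ℝ)] with ρ hρ
    have h1 : gammaMeasure ((N - 1 : ℕ) : ℝ) 1 (Set.Iio (c / ρ)) ≤ ℙ (E ρ) := by
      rw [← hPA ρ]; exact measure_mono (hsub₁ ρ hρ)
    exact mul_le_mul_of_nonneg_left (ENNReal.toReal_mono (measure_ne_top _ _) h1)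
      (pow_nonneg hρ.le _)
  have hmain_hi : ∀ᶠ ρ in atTop, ρ ^ (N - 1) * (ℙ (E ρ)).toReal ≤ L + r ρ := by
    filter_upwards [eventually_gt_atTop (0:ℝ)] with ρ hρ
    have hcd : 0 ≤ c / ρ := (div_pos hc hρ).le
    have h1 : ℙ (E ρ) ≤ ENNReal.ofReal ((c/ρ) ^ (N-1) / ((N-1).factorial : ℝ)) +
        ENNReal.ofReal ((s₀ / ρ) ^ q * M) := by
      refine le_trans (measure_mono (hsub₂ ρ hρ)) ?_
      refine le_trans (measure_union_le _ _) ?_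
      refine add_le_add ?_ ?_
      · rw [hPA ρ]
        exact gamma_Iio_le (N-1) (by omega) hcd
      · refine le_trans (measure_union_le _ _) ?_
        rw [hPZ, add_zero]
        exact hPB ρ hρ
    have h2 : (ℙ (E ρ)).toReal ≤ (c/ρ) ^ (N-1) / ((N-1).factorial : ℝ) + (s₀ / ρ) ^ q * M := by
      refine le_trans (ENNReal.toReal_mono (by finiteness) h1) ?_
      rw [ENNReal.toReal_add ENNReal.ofReal_ne_top ENNReal.ofReal_ne_top,
        ENNReal.toReal_ofReal (by positivity),
        ENNReal.toReal_ofReal (mul_nonneg (Real.rpow_nonneg (div_pos hs₀ hρ).le q) hM0)]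
    have h3 := mul_le_mul_of_nonneg_left h2 (pow_nonneg hρ.le (N-1))
    refine le_trans h3 (le_of_eq ?_)
    rw [mul_add, hpowc ρ hρ]
  exact tendsto_of_tendsto_of_tendsto_of_le_of_le' hg hh hmain_lo hmain_hi
end

section
/- Let N ≥ 1 be an integer and let ρ₁, D₁, D₂, η, γ > 0 be reals, and let C denote the Euler–Mascheroni constant. Define f : (0,1) → ℝ by f(θ) = (1−θ)^{−N} + [ ln((1−θ)·ρ₁) − ln(D₁·γ) − C ] · (D₂/(η·θ))^N / Γ(N). If θ* ∈ (0,1) is a local minimum of f, then N·θ*^{N+1} − b₁·(1−θ*)^{N+1} − c₁·θ*·(1−θ*)^N − e₁·(1−θ*)^{N+1}·ln(1−θ*) = 0, where b₁ = D₂^N·N·(ln ρ₁ − ln(D₁γ) − C)/(η^N·Γ(N)), c₁ = D₂^N/(η^N·Γ(N)) and e₁ = N·D₂^N/(η^N·Γ(N)). -/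
open Filter

/-- **Proposition 1** (outage-optimal power-splitting ratio, noise-limited system): let
`f(θ) = (1−θ)^{−N} + (ln((1−θ)ρ₁) − ln(D₁γ) − C)(D₂/(ηθ))^N/Γ(N)` on `(0,1)`, where `C` is
the Euler–Mascheroni constant. If `θ* ∈ (0,1)` is a local minimum of `f`, then
`N θ*^{N+1} − b₁(1−θ*)^{N+1} − c₁θ*(1−θ*)^N − e₁(1−θ*)^{N+1} ln(1−θ*) = 0` with
`b₁ = D₂^N N (ln ρ₁ − ln(D₁γ) − C)/(η^N Γ(N))`, `c₁ = D₂^N/(η^N Γ(N))` and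
`e₁ = N D₂^N/(η^N Γ(N))`. -/
theorem optimal_theta_noise_limited
    (N : ℕ) (hN : 1 ≤ N) (ρ₁ D₁ D₂ η γ : ℝ)
    (hρ₁ : 0 < ρ₁) (hD₁ : 0 < D₁) (hD₂ : 0 < D₂) (hη : 0 < η) (hγ : 0 < γ)
    (f : ℝ → ℝ)
    (hf : ∀ θ ∈ Set.Ioo (0 : ℝ) 1, f θ =
      ((1 - θ) ^ N)⁻¹ +
        (Real.log ((1 - θ) * ρ₁) - Real.log (D₁ * γ) - Real.eulerMascheroniConstant) *
          (D₂ / (η * θ)) ^ N / Real.Gamma N)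
    (θs : ℝ) (hθs : θs ∈ Set.Ioo (0 : ℝ) 1) (hmin : IsLocalMin f θs) :
    (N : ℝ) * θs ^ (N + 1) -
      (D₂ ^ N * N * (Real.log ρ₁ - Real.log (D₁ * γ) - Real.eulerMascheroniConstant) /
          (η ^ N * Real.Gamma N)) * (1 - θs) ^ (N + 1) -
      (D₂ ^ N / (η ^ N * Real.Gamma N)) * θs * (1 - θs) ^ N -
      ((N : ℝ) * D₂ ^ N / (η ^ N * Real.Gamma N)) * (1 - θs) ^ (N + 1) *
        Real.log (1 - θs) = 0 := by
  obtain ⟨M, rfl⟩ : ∃ M, N = M + 1 := ⟨N - 1, (Nat.succ_pred_eq_of_pos hN).symm⟩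
  obtain ⟨hx0, hx1⟩ := hθs
  set x := θs
  have h1x : (0:ℝ) < 1 - x := by linarith
  have hΓ : 0 < Real.Gamma (M + 1 : ℕ) := Real.Gamma_pos_of_pos (by positivity)
  -- derivative computation
  have h1 : HasDerivAt (fun t : ℝ => 1 - t) (-1) x := by
    have h := (hasDerivAt_const x (1:ℝ)).sub (hasDerivAt_id x); simp at h; exact h
  have hP : HasDerivAt (fun t : ℝ => (1 - t) ^ (M + 1)) ((M + 1 : ℕ) * (1 - x) ^ M * (-1)) x := by
    have h := h1.pow (M + 1); simp at h ⊢; exact h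
  have hInv : HasDerivAt (fun t : ℝ => ((1 - t) ^ (M + 1))⁻¹)
      (-((M + 1 : ℕ) * (1 - x) ^ M * (-1)) / ((1 - x) ^ (M + 1)) ^ 2) x :=
    hP.inv (pow_ne_zero _ h1x.ne')
  have hlog : HasDerivAt (fun t : ℝ => Real.log ((1 - t) * ρ₁)) ((-1 * ρ₁) / ((1 - x) * ρ₁)) x :=
    (h1.mul_const ρ₁).log (by positivity)
  have hu : HasDerivAt (fun t : ℝ => Real.log ((1 - t) * ρ₁) - Real.log (D₁ * γ) - Real.eulerMascheroniConstant)
      ((-1 * ρ₁) / ((1 - x) * ρ₁)) x := (hlog.sub_const _).sub_const _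
  have hηt : HasDerivAt (fun t : ℝ => η * t) η x := by
    simpa using (hasDerivAt_id x).const_mul η
  have hw : HasDerivAt (fun t : ℝ => D₂ / (η * t)) ((0 * (η * x) - D₂ * η) / (η * x) ^ 2) x :=
    (hasDerivAt_const x D₂).div hηt (by positivity)
  have hv : HasDerivAt (fun t : ℝ => (D₂ / (η * t)) ^ (M + 1))
      ((M + 1 : ℕ) * (D₂ / (η * x)) ^ M * ((0 * (η * x) - D₂ * η) / (η * x) ^ 2)) x := by
    have h := hw.pow (M + 1); simp at h ⊢; exact h
  have hprod := (hu.mul hv).div_const (Real.Gamma (M + 1 : ℕ))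
  have htot := hInv.add hprod
  have hfg : f =ᶠ[nhds x] fun θ =>
      ((1 - θ) ^ (M + 1))⁻¹ +
        (Real.log ((1 - θ) * ρ₁) - Real.log (D₁ * γ) - Real.eulerMascheroniConstant) *
          (D₂ / (η * θ)) ^ (M + 1) / Real.Gamma (M + 1 : ℕ) :=
    Filter.eventuallyEq_of_mem (isOpen_Ioo.mem_nhds ⟨hx0, hx1⟩) hf
  have hD := (hmin.congr hfg).hasDerivAt_eq_zero htot
  -- algebra
  have hlx : Real.log ((1 - x) * ρ₁) = Real.log (1 - x) + Real.log ρ₁ :=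
    Real.log_mul h1x.ne' hρ₁.ne'
  rw [hlx] at hD
  have hxne : x ≠ 0 := hx0.ne'
  have h1xne : (1 - x) ≠ 0 := h1x.ne'
  have hηne : η ≠ 0 := hη.ne'
  have hρne : ρ₁ ≠ 0 := hρ₁.ne'
  have hΓne : Real.Gamma (M + 1 : ℕ) ≠ 0 := hΓ.ne'
  set L := Real.log ρ₁ - Real.log (D₁ * γ) - Real.eulerMascheroniConstant with hL
  set l := Real.log (1 - x) with hl
  set A := D₂ ^ (M + 1) / (η ^ (M + 1) * Real.Gamma (M + 1 : ℕ)) with hA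
  have key : ((M + 1 : ℕ) : ℝ) * x ^ (M + 2) - A * x * (1 - x) ^ (M + 1)
      - ((M + 1 : ℕ) : ℝ) * A * (l + L) * (1 - x) ^ (M + 2) = 0 := by
    have expand : ((M + 1 : ℕ) : ℝ) * x ^ (M + 2) - A * x * (1 - x) ^ (M + 1)
        - ((M + 1 : ℕ) : ℝ) * A * (l + L) * (1 - x) ^ (M + 2)
        = x ^ (M + 2) * (1 - x) ^ (M + 2) *
          (-((M + 1 : ℕ) * (1 - x) ^ M * (-1)) / ((1 - x) ^ (M + 1)) ^ 2 +
            (-1 * ρ₁ / ((1 - x) * ρ₁) * (D₂ / (η * x)) ^ (M + 1) +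
              (l + Real.log ρ₁ - Real.log (D₁ * γ) - Real.eulerMascheroniConstant) *
                ((M + 1 : ℕ) * (D₂ / (η * x)) ^ M * ((0 * (η * x) - D₂ * η) / (η * x) ^ 2))) /
              Real.Gamma (M + 1 : ℕ)) := by
      rw [hA, hL]
      simp only [div_pow, mul_pow]
      field_simp
      ring
    rw [expand, hD, mul_zero]
  -- now convert to the stated form
  rw [hA, hL, hl] at key
  linear_combination key
end
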